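/- Let X be a graph on n vertices whose Laplacian L has spectral decomposition L = Σ_{r=0}^d θ_r E_r with θ_0 = 0. Suppose each spectral idempotent of L(K_n) = nI − J (namely J/n and I − J/n) is a sum of the E_r. Then M̂_L(K_n) − M̂_L(X) is positive semidefinite, where M̂_L denotes the sum of Schur squares of the Laplacian spectral idempotents. In particular, if X is connected (so E_0 = J/n), then M̂_L(K_n) ⪰ M̂_L(X). -/

import Mathlib

open Matrix

open Finset in
lemma psd_sum' {n : ℕ} {ι : Type*} (T : Finset ι) (f : ι → Matrix (Fin n) (Fin n) ℝ)
    (h : ∀ i ∈ T, (f i).PosSemidef) : (∑ i ∈ T, f i).PosSemidef := by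
  classical
  exact Finset.sum_induction f _ (fun a b ha hb => ha.add hb) Matrix.PosSemidef.zero h

lemma sum_rot {n : ℕ} (f : Fin n → Fin n → Fin n → ℝ) :
    ∑ i, ∑ j, ∑ k, f i j k = ∑ k, ∑ i, ∑ j, f i j k := by
  rw [Finset.sum_congr rfl fun i (_ : i ∈ Finset.univ) =>
    (Finset.sum_comm : (∑ j, ∑ k, f i j k) = ∑ k, ∑ j, f i j k)]
  exact Finset.sum_comm

/-- Schur product theorem for A = Cᵀ * C. -/
lemma hadamard_psd {n : ℕ} (C B : Matrix (Fin n) (Fin n) ℝ) (hB : B.PosSemidef) :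
    ((Cᵀ * C).hadamard B).PosSemidef := by
  rw [Matrix.posSemidef_iff_dotProduct_mulVec]
  constructor
  · ext i j
    simp only [Matrix.conjTranspose_apply, star_trivial, Matrix.hadamard_apply,
      Matrix.mul_apply, Matrix.transpose_apply]
    have hBs : B j i = B i j := by simpa using hB.1.apply i j
    rw [hBs, Finset.sum_congr rfl fun x _ => mul_comm (C x j) (C x i)]
  · intro x
    have key : (star x) ⬝ᵥ (((Cᵀ * C).hadamard B) *ᵥ x)
        = ∑ k, (star fun i => C k i * x i) ⬝ᵥ (B *ᵥ fun i => C k i * x i) := by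
      simp only [dotProduct, Matrix.mulVec, Matrix.hadamard_apply,
        Matrix.mul_apply, Matrix.transpose_apply, star_trivial,
        Finset.mul_sum, Finset.sum_mul]
      rw [sum_rot]
      refine Finset.sum_congr rfl fun k _ => Finset.sum_congr rfl fun i _ =>
        Finset.sum_congr rfl fun j _ => by ring
    rw [key]
    exact Finset.sum_nonneg fun k _ => hB.dotProduct_mulVec_nonneg _

theorem complete_graph_maximizes_lap_avg_mixing {n d : ℕ}
    (J : Matrix (Fin n) (Fin n) ℝ) (hJ : J = Matrix.of fun _ _ => 1)
    (E : Fin (d + 1) → Matrix (Fin n) (Fin n) ℝ)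
    (hsym : ∀ r, (E r).IsSymm)
    (hidem : ∀ r, E r * E r = E r)
    (horth : ∀ r s, r ≠ s → E r * E s = 0)
    (hsum : ∑ r, E r = 1)
    (S : Finset (Fin (d + 1)))
    (hS1 : (n : ℝ)⁻¹ • J = ∑ r ∈ S, E r)
    (hS2 : 1 - (n : ℝ)⁻¹ • J = ∑ r ∈ Sᶜ, E r) :
    ((((n : ℝ)⁻¹ • J).hadamard ((n : ℝ)⁻¹ • J) +
        (1 - (n : ℝ)⁻¹ • J).hadamard (1 - (n : ℝ)⁻¹ • J))
      - ∑ r, (E r).hadamard (E r)).PosSemidef := by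
  classical
  have hEeq : ∀ r, E r = (E r)ᵀ * E r := fun r => by
    rw [(hsym r).eq, hidem r]
  have hpsd : ∀ r s, ((E r).hadamard (E s)).PosSemidef := by
    intro r s
    have hBs : (E s).PosSemidef := by
      rw [hEeq s, ← Matrix.conjTranspose_eq_transpose_of_trivial]
      exact Matrix.posSemidef_conjTranspose_mul_self (E s)
    rw [hEeq r]
    exact hadamard_psd (E r) (E s) hBs
  -- expand hadamard of sums
  have hexp : ∀ T : Finset (Fin (d + 1)),
      (∑ r ∈ T, E r).hadamard (∑ r ∈ T, E r)
        = ∑ r ∈ T, ∑ s ∈ T, (E r).hadamard (E s) := by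
    intro T
    ext i j
    simp only [Matrix.hadamard_apply, Finset.sum_apply, Matrix.sum_apply]
    rw [Finset.sum_mul_sum]
  rw [hS2, hS1, hexp, hexp,
    ← Finset.sum_add_sum_compl S (fun r => (E r).hadamard (E r))]
  have hsplit : ∀ T : Finset (Fin (d + 1)),
      ∑ r ∈ T, ∑ s ∈ T, (E r).hadamard (E s)
        = (∑ r ∈ T, ∑ s ∈ T.erase r, (E r).hadamard (E s))
          + ∑ r ∈ T, (E r).hadamard (E r) := by
    intro T
    rw [← Finset.sum_add_distrib]
    refine Finset.sum_congr rfl fun r hr => ?_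
    exact (Finset.sum_erase_add T _ hr).symm
  rw [hsplit, hsplit]
  have : (∑ r ∈ S, ∑ s ∈ S.erase r, (E r).hadamard (E s)) + ∑ r ∈ S, (E r).hadamard (E r) +
      ((∑ r ∈ Sᶜ, ∑ s ∈ Sᶜ.erase r, (E r).hadamard (E s)) + ∑ r ∈ Sᶜ, (E r).hadamard (E r)) -
      (∑ r ∈ S, (E r).hadamard (E r) + ∑ r ∈ Sᶜ, (E r).hadamard (E r))
      = (∑ r ∈ S, ∑ s ∈ S.erase r, (E r).hadamard (E s))
        + ∑ r ∈ Sᶜ, ∑ s ∈ Sᶜ.erase r, (E r).hadamard (E s) := by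
    abel
  rw [this]
  exact (psd_sum' S _ (fun r _ => psd_sum' _ _ fun s _ => hpsd r s)).add
    (psd_sum' Sᶜ _ (fun r _ => psd_sum' _ _ fun s _ => hpsd r s))
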